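/- arXiv:1610.02194 — 2 statements merged into one kernel-verified Lean document; each statement's English description precedes it below -/
import Mathlib

section
/- With B and ψ the relativised collapsing hierarchy: if γ ≤ δ and the interval [γ, δ) is disjoint from B(γ), then B(γ) = B(δ). -/
open Ordinal

/-- The binary Veblen function: `veblen 0 β = ω ^ β`, and for `α > 0`,
`veblen α` enumerates the common fixed points of `veblen γ` for `γ < α`. -/
noncomputable def veblen : Ordinal → Ordinal → Ordinal :=
  WellFounded.fix Ordinal.lt_wf
    (fun α ih => if α = 0 then fun β => omega0 ^ β
      else derivFamily.{0} (familyOfBFamily α (fun ξ h => ih ξ h)))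

/-- The set of strongly critical ordinals. -/
def StronglyCritical (γ : Ordinal) : Prop := _root_.veblen γ 0 = γ

/-- `Gamma β` is the `β`-th strongly critical ordinal. -/
noncomputable def Gamma : Ordinal → Ordinal :=
  enumOrd {γ | StronglyCritical γ}

/-- The least uncountable cardinal (as an ordinal) greater than `θ`. -/
noncomputable def OmegaB (θ : Ordinal) : Ordinal :=
  sInf {o | θ < o ∧ o.card.ord = o ∧ Cardinal.aleph0 < o.card}

/-- Closure of `{0, Ω} ∪ {Γ_β : β ≤ θ}` under `+`, `veblen` and the
given partial collapsing function `f` on arguments below `α`. -/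
def closB (θ α : Ordinal) (f : ∀ ξ, ξ < α → Ordinal) : Set Ordinal :=
  ⋂₀ {S : Set Ordinal |
      0 ∈ S ∧ OmegaB θ ∈ S ∧ (∀ β ≤ θ, Gamma β ∈ S) ∧
      (∀ x ∈ S, ∀ y ∈ S, x + y ∈ S) ∧
      (∀ x ∈ S, ∀ y ∈ S, _root_.veblen x y ∈ S) ∧
      (∀ ξ (h : ξ < α), ξ ∈ S → f ξ h ∈ S)}

/-- The relativised collapsing function `ψ_θ`. -/
noncomputable def psiB (θ : Ordinal) : Ordinal → Ordinal :=
  WellFounded.fix Ordinal.lt_wf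
    (fun α ih => sInf {β | β ∉ closB θ α (fun ξ h => ih ξ h)})

/-- The relativised collapsing hierarchy `B_θ(α)`. -/
def BB (θ α : Ordinal) : Set Ordinal :=
  closB θ α (fun ξ _ => psiB θ ξ)

/-- The least strongly critical ordinal strictly above `δ`. -/
noncomputable def gammaSucc (δ : Ordinal) : Ordinal :=
  sInf {γ | δ < γ ∧ StronglyCritical γ}

theorem stmt8 (θ γ δ : Ordinal) (h : γ ≤ δ)
    (hdisj : Set.Ico γ δ ∩ BB θ γ = ∅) : BB θ γ = BB θ δ := by
  apply Set.Subset.antisymm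
  · -- B γ ⊆ B δ : δ imposes stronger conditions
    intro x hx
    intro S hS
    obtain ⟨h0, hΩ, hΓ, hadd, hveb, hpsi⟩ := hS
    exact hx S ⟨h0, hΩ, hΓ, hadd, hveb, fun ξ hξ => hpsi ξ (lt_of_lt_of_le hξ h)⟩
  · -- B δ ⊆ B γ : B γ satisfies the δ-conditions
    intro x hx
    apply hx (BB θ γ)
    refine ⟨?_, ?_, ?_, ?_, ?_, ?_⟩
    · intro S hS; exact hS.1
    · intro S hS; exact hS.2.1
    · intro β hβ S hS; exact hS.2.2.1 β hβ
    · intro a ha b hb S hS; exact hS.2.2.2.1 a (ha S hS) b (hb S hS)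
    · intro a ha b hb S hS; exact hS.2.2.2.2.1 a (ha S hS) b (hb S hS)
    · intro ξ hξ hξmem
      by_cases hlt : ξ < γ
      · intro S hS; exact hS.2.2.2.2.2 ξ hlt (hξmem S hS)
      · exfalso
        have hmem : ξ ∈ Set.Ico γ δ ∩ BB θ γ :=
          ⟨⟨le_of_not_gt hlt, hξ⟩, hξmem⟩
        rw [hdisj] at hmem
        exact hmem
end

section
/- With B and ψ the relativised collapsing hierarchy: for every ordinal γ, B(γ) ∩ Ω = ψ(γ), i.e., the set of ordinals in B(γ) that are below Ω is exactly the set of ordinals below ψ(γ). -/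
open Ordinal

set_option linter.deprecated false

/-! ### Basic facts about `_root_.veblen` -/

theorem veblen_def (α : Ordinal) : _root_.veblen α =
    if α = 0 then fun β => omega0 ^ β
      else derivFamily.{0} (familyOfBFamily α (fun ξ _ => _root_.veblen ξ)) := by
  rw [_root_.veblen, WellFounded.fix_eq]

theorem veblen_zero (β : Ordinal) : _root_.veblen 0 β = omega0 ^ β := by
  rw [veblen_def]; simp

theorem veblen_of_ne (α : Ordinal) (h : α ≠ 0) :
    _root_.veblen α = derivFamily.{0} (familyOfBFamily α (fun ξ _ => _root_.veblen ξ)) := by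
  rw [veblen_def]; simp [h]

theorem isNormal_veblen (α : Ordinal.{0}) : Order.IsNormal (_root_.veblen α) := by
  rcases eq_or_ne α 0 with rfl | h
  · have : _root_.veblen 0 = fun β => omega0 ^ β := by funext β; exact _root_.veblen_zero β
    rw [this]; exact isNormal_opow one_lt_omega0
  · rw [veblen_of_ne α h]; exact isNormal_derivFamily _

theorem veblen_fp {ξ α : Ordinal.{0}} (h : ξ < α) (β : Ordinal) :
    _root_.veblen ξ (_root_.veblen α β) = _root_.veblen α β := by
  rw [veblen_of_ne α (fun h0 => absurd h0.symm (h.trans_le' (show 0 ≤ ξ from zero_le)).ne)]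
  have key := familyOfBFamily_enum α (fun ξ _ => _root_.veblen ξ) ξ h
  rw [← key]
  exact derivFamily_fp (by rw [key]; exact _root_.isNormal_veblen ξ) β

theorem exists_veblen_eq {α x : Ordinal.{0}} (hα : α ≠ 0)
    (h : ∀ ξ < α, _root_.veblen ξ x = x) : ∃ b, _root_.veblen α b = x := by
  rw [veblen_of_ne α hα]
  exact (fp_iff_derivFamily (fun i => _root_.isNormal_veblen _)).1 (fun i => h _ (typein_lt_self i))

theorem veblen_pos' {α : Ordinal.{0}} (β : Ordinal) : 0 < _root_.veblen α β := by
  rcases eq_or_ne α 0 with rfl | h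
  · rw [_root_.veblen_zero]; exact opow_pos β omega0_pos
  · have := veblen_fp (pos_iff_ne_zero.2 h) β
    rw [_root_.veblen_zero] at this
    calc 0 < omega0 ^ (_root_.veblen α β) := opow_pos _ omega0_pos
    _ = _ := this

theorem strictMono_veblen_zero : StrictMono (fun a : Ordinal.{0} => _root_.veblen a 0) := by
  intro a b hab
  have h1 : _root_.veblen a (_root_.veblen b 0) = _root_.veblen b 0 := veblen_fp hab 0
  calc _root_.veblen a 0 < _root_.veblen a (_root_.veblen b 0) :=
        (_root_.isNormal_veblen a).strictMono (veblen_pos' 0)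
  _ = _root_.veblen b 0 := h1

theorem le_veblen_left (a b : Ordinal) : a ≤ _root_.veblen a b :=
  le_trans (strictMono_veblen_zero.le_apply) ((_root_.isNormal_veblen a).monotone (show 0 ≤ b from zero_le))

theorem le_veblen_right (a b : Ordinal.{0}) : b ≤ _root_.veblen a b :=
  (_root_.isNormal_veblen a).strictMono.le_apply

/-! ### Strongly critical ordinals -/

theorem sc_of_fp {y : Ordinal} (hy : y ≠ 0) (h : ∀ a < y, _root_.veblen a y = y) :
    StronglyCritical y := by
  obtain ⟨b, hb⟩ := exists_veblen_eq hy h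
  have h1 : _root_.veblen y 0 ≤ _root_.veblen y b := (_root_.isNormal_veblen y).monotone (show 0 ≤ b from zero_le)
  rw [hb] at h1
  exact le_antisymm h1 (le_veblen_left y 0)

theorem sc_fp {y : Ordinal} (hy : StronglyCritical y) {a : Ordinal} (ha : a < y) :
    _root_.veblen a y = y := by
  conv_lhs => rw [← hy]
  rw [veblen_fp ha, hy]

theorem sc_veblen_lt {y : Ordinal} (hy : StronglyCritical y) {a b : Ordinal}
    (ha : a < y) (hb : b < y) : _root_.veblen a b < y := by
  calc _root_.veblen a b < _root_.veblen a y := (_root_.isNormal_veblen a).strictMono hb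
  _ = y := sc_fp hy ha

theorem veblen_decomp {y : Ordinal} (hy : y ≠ 0) (hsc : ¬ StronglyCritical y) :
    (∃ a b, a < y ∧ b < y ∧ y = a + b) ∨ (∃ a b, a < y ∧ b < y ∧ y = _root_.veblen a b) := by
  by_cases hp : Principal (· + ·) y
  · right
    rcases (principal_add_iff_zero_or_omega0_opow.1 hp) with rfl | ⟨c, rfl⟩
    · exact absurd rfl hy
    rcases lt_or_eq_of_le (right_le_opow c one_lt_omega0) with hc | hc
    · exact ⟨0, c, pos_iff_ne_zero.2 hy, hc, (_root_.veblen_zero c).symm⟩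
    · set y := omega0 ^ c with hydef
      have hfix0 : _root_.veblen 0 y = y := by rw [_root_.veblen_zero, ← hc]; exact hc.symm
      have hex : ∃ a, a < y ∧ _root_.veblen a y ≠ y := by
        by_contra hcon
        push_neg at hcon
        exact hsc (sc_of_fp hy fun a ha => hcon a ha)
      classical
      set a := sInf {a : Ordinal | _root_.veblen a y ≠ y} with hadef
      have hane : {a : Ordinal | _root_.veblen a y ≠ y}.Nonempty := ⟨hex.choose, hex.choose_spec.2⟩
      have haspec : _root_.veblen a y ≠ y := csInf_mem hane
      have hamin : ∀ a' < a, _root_.veblen a' y = y := fun a' ha' => by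
        by_contra hcc
        exact absurd (csInf_le' (show a' ∈ {a : Ordinal | _root_.veblen a y ≠ y} from hcc)) (not_le.2 ha')
      have ha0 : a ≠ 0 := fun h => haspec (h ▸ hfix0)
      obtain ⟨b, hb⟩ := exists_veblen_eq ha0 hamin
      have hay : a < y := lt_of_le_of_lt
        (csInf_le' (show hex.choose ∈ {a : Ordinal | _root_.veblen a y ≠ y} from hex.choose_spec.2))
        hex.choose_spec.1
      have hby : b < y :=
        lt_of_le_of_ne (hb ▸ le_veblen_right a b) (fun h => haspec (h ▸ hb))
      exact ⟨a, b, hay, hby, hb.symm⟩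
  · left
    unfold Principal IsPrincipal at hp
    push_neg at hp
    obtain ⟨u, v, hu, hv, huv⟩ := hp
    refine ⟨u, y - u, hu, ?_, (Ordinal.add_sub_cancel_of_le hu.le).symm⟩
    exact lt_of_le_of_lt (Ordinal.sub_le.2 huv) hv

theorem sc_unbounded : ¬ BddAbove {γ : Ordinal | StronglyCritical γ} := by
  rw [not_bddAbove_iff]
  intro o
  let x : ℕ → Ordinal := fun n => (fun a => _root_.veblen a 0)^[n] (o + 1)
  have hx0 : x 0 = o + 1 := rfl
  have hxs : ∀ n, x (n + 1) = _root_.veblen (x n) 0 := fun n =>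
    Function.iterate_succ_apply' _ n _
  have hmono : ∀ n, x n ≤ x (n + 1) := fun n => (hxs n).symm ▸ le_veblen_left (x n) 0
  have hmono' : Monotone x := monotone_nat_of_le_succ hmono
  have hlt : ∀ n, o < x n := fun n =>
    lt_of_lt_of_le (lt_add_one o) (hx0 ▸ hmono' (Nat.zero_le n))
  by_cases hconst : ∃ n, StronglyCritical (x n)
  · obtain ⟨n, hn⟩ := hconst
    exact ⟨x n, hn, hlt n⟩
  · push_neg at hconst
    have hstrict : ∀ n, x n < x (n + 1) := fun n =>
      lt_of_le_of_ne (hmono n) (fun h => hconst n (by rw [hxs n] at h; exact h.symm))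
    set γ := ⨆ n, x n with hγ
    have hbd : BddAbove (Set.range x) := Ordinal.bddAbove_range x
    have hle : ∀ n, x n ≤ γ := fun n => le_ciSup hbd n
    have hltγ : ∀ n, x n < γ := fun n => lt_of_lt_of_le (hstrict n) (hle (n+1))
    have hlim : Order.IsSuccLimit γ := by
      rw [isSuccLimit_iff, Order.isSuccPrelimit_iff_succ_lt]
      constructor
      · intro h
        exact absurd (h ▸ hltγ 0) (by simp)
      · intro a ha
        obtain ⟨n, hn⟩ := Ordinal.lt_iSup_iff.1 ha
        exact lt_of_le_of_lt (Order.succ_le_of_lt hn)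
          (lt_of_lt_of_le (hstrict n) (hle (n+1)))
    have hfp : ∀ a < γ, _root_.veblen a γ = γ := by
      intro a ha
      refine le_antisymm ?_ (_root_.isNormal_veblen a).strictMono.le_apply
      rw [(_root_.isNormal_veblen a).le_iff_forall_le hlim]
      intro b hb
      obtain ⟨n, hn⟩ := Ordinal.lt_iSup_iff.1 hb
      obtain ⟨m, hm⟩ := Ordinal.lt_iSup_iff.1 ha
      have h1 : b < x (max n m) := lt_of_lt_of_le hn (hmono' (le_max_left n m))
      have h2 : a < x (max n m) := lt_of_lt_of_le hm (hmono' (le_max_right n m))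
      calc _root_.veblen a b ≤ _root_.veblen a (x (max n m)) := (_root_.isNormal_veblen a).monotone h1.le
      _ ≤ _root_.veblen a (x (max n m + 1)) := (_root_.isNormal_veblen a).monotone (hmono _)
      _ = x (max n m + 1) := by rw [hxs]; exact veblen_fp h2 0
      _ ≤ γ := hle _
    exact ⟨γ, sc_of_fp (isSuccLimit_iff.1 hlim).1 hfp, lt_of_lt_of_le (hlt 0) (hle 0)⟩

theorem sc_gamma (β : Ordinal) : StronglyCritical (Gamma β) :=
  enumOrd_mem sc_unbounded β

theorem gamma_surj {y : Ordinal} (hy : StronglyCritical y) : ∃ β, Gamma β = y := by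
  have := range_enumOrd sc_unbounded (s := {γ : Ordinal | StronglyCritical γ})
  rw [Set.range_eq_iff] at this
  exact this.2 y hy

theorem gamma_lt_gamma {a b : Ordinal} : Gamma a < Gamma b ↔ a < b :=
  (enumOrd_strictMono sc_unbounded).lt_iff_lt

/-! ### Basic facts about `OmegaB` -/

theorem omegaB_spec (θ : Ordinal) :
    θ < OmegaB θ ∧ (OmegaB θ).card.ord = OmegaB θ ∧ Cardinal.aleph0 < (OmegaB θ).card := by
  have hne : {o : Ordinal | θ < o ∧ o.card.ord = o ∧ Cardinal.aleph0 < o.card}.Nonempty := by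
    refine ⟨(Order.succ (max θ.card Cardinal.aleph0)).ord, ?_, ?_, ?_⟩
    · rw [Cardinal.lt_ord]
      exact lt_of_le_of_lt (le_max_left _ _) (Order.lt_succ _)
    · rw [Cardinal.card_ord]
    · rw [Cardinal.card_ord]
      exact lt_of_le_of_lt (le_max_right _ _) (Order.lt_succ _)
  exact csInf_mem hne

theorem theta_lt_omegaB (θ : Ordinal) : θ < OmegaB θ := (omegaB_spec θ).1

theorem card_lt_omegaB (θ : Ordinal) {o : Ordinal} (h : o < OmegaB θ) :
    o.card < (OmegaB θ).card := by
  rw [← Cardinal.lt_ord, (omegaB_spec θ).2.1]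
  exact h

theorem aleph0_lt_card_omegaB (θ : Ordinal) : Cardinal.aleph0 < (OmegaB θ).card :=
  (omegaB_spec θ).2.2

/-! ### The generation predicate -/

inductive GenB (θ γ : Ordinal) : Ordinal → Prop
  | zero : GenB θ γ 0
  | om : GenB θ γ (OmegaB θ)
  | gam {β : Ordinal} (h : β ≤ θ) : GenB θ γ (Gamma β)
  | add {x y : Ordinal} : GenB θ γ x → GenB θ γ y → GenB θ γ (x + y)
  | veb {x y : Ordinal} : GenB θ γ x → GenB θ γ y → GenB θ γ (_root_.veblen x y)
  | psi {ξ : Ordinal} (h : ξ < γ) : GenB θ γ ξ → GenB θ γ (psiB θ ξ)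

theorem closB_subset_genB {θ γ γ' : Ordinal} (h : γ' ≤ γ) :
    closB θ γ' (fun ξ _ => psiB θ ξ) ⊆ {x | GenB θ γ x} := by
  apply Set.sInter_subset_of_mem
  refine ⟨GenB.zero, GenB.om, fun β hβ => GenB.gam hβ,
    fun x hx y hy => GenB.add hx hy, fun x hx y hy => GenB.veb hx hy,
    fun ξ hξ hξ' => GenB.psi (lt_of_lt_of_le hξ h) hξ'⟩

theorem BB_subset_genB {θ γ : Ordinal} : BB θ γ ⊆ {x | GenB θ γ x} :=
  closB_subset_genB le_rfl

theorem genB_subset_BB {θ γ x : Ordinal} (hx : GenB θ γ x) : x ∈ BB θ γ := by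
  intro S hS
  obtain ⟨h0, hΩ, hΓ, hadd, hveb, hpsi⟩ := hS
  induction hx with
  | zero => exact h0
  | om => exact hΩ
  | gam h => exact hΓ _ h
  | add hx hy ihx ihy => exact hadd _ ihx _ ihy
  | veb hx hy ihx ihy => exact hveb _ ihx _ ihy
  | psi h hx ih => exact hpsi _ h ih

theorem BB_eq_genB {θ γ : Ordinal} : BB θ γ = {x | GenB θ γ x} :=
  Set.Subset.antisymm BB_subset_genB (fun _ h => genB_subset_BB h)

theorem psiB_eq (θ α : Ordinal) : psiB θ α = sInf {β | β ∉ BB θ α} := by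
  rw [psiB, WellFounded.fix_eq]
  rfl

theorem lt_psiB_mem {θ α b : Ordinal} (h : b < psiB θ α) : b ∈ BB θ α := by
  by_contra hb
  rw [psiB_eq] at h
  exact absurd (csInf_le' (show b ∈ {β | β ∉ BB θ α} from hb)) (not_le.2 h)

/-! ### Smallness of `BB` -/

/-- One closure step. -/
def clStep (θ γ : Ordinal) (S : Set Ordinal) : Set Ordinal :=
  S ∪ Set.image2 (· + ·) S S ∪ Set.image2 _root_.veblen S S ∪ (psiB θ '' (S ∩ Set.Iio γ))

/-- Iterated closure steps. -/
def clIter (θ γ : Ordinal) : ℕ → Set Ordinal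
  | 0 => {0, OmegaB θ} ∪ (Gamma '' Set.Iic θ)
  | n + 1 => clStep θ γ (clIter θ γ n)

theorem clIter_mono {θ γ : Ordinal} : Monotone (clIter θ γ) := by
  apply monotone_nat_of_le_succ
  intro n
  exact (Set.subset_union_left.trans Set.subset_union_left).trans Set.subset_union_left

theorem BB_subset_clIter {θ γ : Ordinal} : BB θ γ ⊆ ⋃ n, clIter θ γ n := by
  apply Set.sInter_subset_of_mem
  refine ⟨?_, ?_, ?_, ?_, ?_, ?_⟩
  · exact Set.mem_iUnion.2 ⟨0, Or.inl (Or.inl rfl)⟩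
  · exact Set.mem_iUnion.2 ⟨0, Or.inl (Or.inr rfl)⟩
  · exact fun β hβ => Set.mem_iUnion.2 ⟨0, Or.inr ⟨β, hβ, rfl⟩⟩
  · intro x hx y hy
    obtain ⟨n, hn⟩ := Set.mem_iUnion.1 hx
    obtain ⟨m, hm⟩ := Set.mem_iUnion.1 hy
    refine Set.mem_iUnion.2 ⟨max n m + 1, Or.inl (Or.inl (Or.inr ?_))⟩
    exact Set.mem_image2_of_mem (clIter_mono (le_max_left n m) hn)
      (clIter_mono (le_max_right n m) hm)
  · intro x hx y hy
    obtain ⟨n, hn⟩ := Set.mem_iUnion.1 hx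
    obtain ⟨m, hm⟩ := Set.mem_iUnion.1 hy
    refine Set.mem_iUnion.2 ⟨max n m + 1, Or.inl (Or.inr ?_)⟩
    exact Set.mem_image2_of_mem (clIter_mono (le_max_left n m) hn)
      (clIter_mono (le_max_right n m) hm)
  · intro ξ hξ hξS
    obtain ⟨n, hn⟩ := Set.mem_iUnion.1 hξS
    exact Set.mem_iUnion.2 ⟨n + 1, Or.inr ⟨ξ, ⟨hn, hξ⟩, rfl⟩⟩

theorem card_clIter (θ γ : Ordinal) (n : ℕ) :
    Cardinal.mk (clIter θ γ n) ≤ Cardinal.lift.{1} (θ.card + Cardinal.aleph0) := by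
  set κ : Cardinal.{1} := Cardinal.lift.{1} (θ.card + Cardinal.aleph0) with hκ
  have hκinf : Cardinal.aleph0 ≤ κ := by
    rw [hκ, ← Cardinal.lift_aleph0.{1,0}]
    exact Cardinal.lift_le.2 (self_le_add_left _ _)
  have hadd : ∀ {a b : Cardinal.{1}}, a ≤ κ → b ≤ κ → a + b ≤ κ := fun {a b} ha hb => by
    calc a + b ≤ κ + κ := add_le_add ha hb
    _ = κ := Cardinal.add_eq_self hκinf
  have hmul : ∀ {a b : Cardinal.{1}}, a ≤ κ → b ≤ κ → a * b ≤ κ := fun {a b} ha hb => by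
    calc a * b ≤ κ * κ := mul_le_mul' ha hb
    _ = κ := Cardinal.mul_eq_self hκinf
  induction n with
  | zero =>
    apply le_trans (Cardinal.mk_union_le _ _)
    apply hadd
    · apply le_trans (Cardinal.mk_insert_le)
      rw [Cardinal.mk_singleton]
      exact le_trans (le_of_lt (Cardinal.add_lt_aleph0 Cardinal.one_lt_aleph0 Cardinal.one_lt_aleph0)) hκinf
    · apply le_trans Cardinal.mk_image_le
      have h1 : (Set.Iic θ) = Set.Iio (θ + 1) := by
        ext z; simp only [Set.mem_Iic, Set.mem_Iio, Ordinal.add_one_eq_succ, Order.lt_succ_iff]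
      rw [h1, Ordinal.mk_Iio_ordinal, hκ]
      apply Cardinal.lift_le.2
      rw [Ordinal.card_add]
      exact add_le_add le_rfl (by simpa using Cardinal.one_le_aleph0)
  | succ n ih =>
    apply le_trans (Cardinal.mk_union_le _ _)
    apply hadd
    apply le_trans (Cardinal.mk_union_le _ _)
    apply hadd
    apply le_trans (Cardinal.mk_union_le _ _)
    apply hadd ih
    · exact le_trans Cardinal.mk_image2_le (hmul ih ih)
    · exact le_trans Cardinal.mk_image2_le (hmul ih ih)
    · apply le_trans Cardinal.mk_image_le
      exact le_trans (Cardinal.mk_le_mk_of_subset Set.inter_subset_left) ih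

set_option maxHeartbeats 1000000 in
theorem exists_not_mem_BB (θ γ : Ordinal) : ∃ β < OmegaB θ, β ∉ BB θ γ := by
  by_contra h
  push_neg at h
  have hsub : Set.Iio (OmegaB θ) ⊆ ⋃ n, clIter θ γ n :=
    fun b hb => BB_subset_clIter (h b hb)
  set κ : Cardinal.{1} := Cardinal.lift.{1} (θ.card + Cardinal.aleph0) with hκ
  have hκinf : Cardinal.aleph0 ≤ κ := by
    rw [hκ, ← Cardinal.lift_aleph0.{1,0}]
    exact Cardinal.lift_le.2 (self_le_add_left _ _)
  have hUeq : (⋃ n, clIter θ γ n) = ⋃ i : ULift.{1} ℕ, clIter θ γ i.down := by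
    ext z
    simp only [Set.mem_iUnion]
    exact ⟨fun ⟨n, hn⟩ => ⟨⟨n⟩, hn⟩, fun ⟨i, hi⟩ => ⟨i.down, hi⟩⟩
  have hcard : Cardinal.mk (⋃ n, clIter θ γ n) ≤ κ := by
    rw [hUeq]
    apply le_trans (Cardinal.mk_iUnion_le _)
    have hUlift : Cardinal.mk (ULift.{1} ℕ) = Cardinal.aleph0 := by
      rw [Cardinal.mk_uLift, Cardinal.mk_nat, Cardinal.lift_aleph0.{1,0}]
    calc Cardinal.mk (ULift.{1} ℕ) * (⨆ i : ULift.{1} ℕ, Cardinal.mk (clIter θ γ i.down))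
        ≤ Cardinal.aleph0 * κ :=
          mul_le_mul' (le_of_eq hUlift) (ciSup_le' fun i => card_clIter θ γ i.down)
    _ ≤ κ * κ := mul_le_mul' hκinf le_rfl
    _ = κ := Cardinal.mul_eq_self hκinf
  have hbig : Cardinal.lift.{1} (OmegaB θ).card ≤ κ := by
    rw [← Ordinal.mk_Iio_ordinal]
    exact le_trans (Cardinal.mk_le_mk_of_subset hsub) hcard
  rw [hκ, Cardinal.lift_le] at hbig
  have hlt : θ.card + Cardinal.aleph0 < (OmegaB θ).card :=
    Cardinal.add_lt_of_lt (le_of_lt (aleph0_lt_card_omegaB θ))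
      (card_lt_omegaB θ (theta_lt_omegaB θ)) (aleph0_lt_card_omegaB θ)
  exact absurd hbig (not_le.2 hlt)

theorem psiB_lt_omegaB (θ γ : Ordinal) : psiB θ γ < OmegaB θ := by
  obtain ⟨β, hβ, hβ'⟩ := exists_not_mem_BB θ γ
  rw [psiB_eq]
  exact lt_of_le_of_lt (csInf_le' hβ') hβ

theorem psiB_not_mem (θ γ : Ordinal) : psiB θ γ ∉ BB θ γ := by
  obtain ⟨β, _, hβ'⟩ := exists_not_mem_BB θ γ
  rw [psiB_eq]
  exact csInf_mem (⟨β, hβ'⟩ : Set.Nonempty {β | β ∉ BB θ γ})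

/-! ### Downward closure of `BB` below `OmegaB` -/

theorem genB_down {θ γ x : Ordinal} (hx : GenB θ γ x) :
    x < OmegaB θ → ∀ y < x, GenB θ γ y := by
  induction hx with
  | zero => exact fun _ y hy => absurd hy (not_lt_of_ge (show 0 ≤ y from zero_le))
  | om => exact fun h => absurd h (lt_irrefl _)
  | @gam β hβ =>
    intro _ y
    induction y using Ordinal.induction with
    | _ y ihy =>
    intro hy
    rcases eq_or_ne y 0 with rfl | hy0
    · exact GenB.zero
    by_cases hsc : StronglyCritical y
    · obtain ⟨β', rfl⟩ := gamma_surj hsc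
      exact GenB.gam (le_of_lt (lt_of_lt_of_le (_root_.gamma_lt_gamma.1 hy) hβ))
    · rcases veblen_decomp hy0 hsc with ⟨a, b, ha, hb, hy'⟩ | ⟨a, b, ha, hb, hy'⟩
      · rw [hy']
        exact GenB.add (ihy a ha (ha.trans hy)) (ihy b hb (hb.trans hy))
      · rw [hy']
        exact GenB.veb (ihy a ha (ha.trans hy)) (ihy b hb (hb.trans hy))
  | @veb u v hu hv ihu ihv =>
    intro hΩ y
    have huΩ : u < OmegaB θ := lt_of_le_of_lt (le_veblen_left u v) hΩ
    have hvΩ : v < OmegaB θ := lt_of_le_of_lt (le_veblen_right u v) hΩ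
    induction y using Ordinal.induction with
    | _ y ihy =>
    intro hy
    rcases eq_or_ne y 0 with rfl | hy0
    · exact GenB.zero
    by_cases hsc : StronglyCritical y
    · have hcase : y ≤ u ∨ y ≤ v := by
        by_contra hcon
        push_neg at hcon
        exact absurd hy (not_lt.2 (le_of_lt (sc_veblen_lt hsc hcon.1 hcon.2)))
      rcases hcase with hcase | hcase
      · rcases lt_or_eq_of_le hcase with h | rfl
        · exact ihu huΩ y h
        · exact hu
      · rcases lt_or_eq_of_le hcase with h | rfl
        · exact ihv hvΩ y h
        · exact hv
    · rcases veblen_decomp hy0 hsc with ⟨a, b, ha, hb, hy'⟩ | ⟨a, b, ha, hb, hy'⟩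
      · rw [hy']
        exact GenB.add (ihy a ha (ha.trans hy)) (ihy b hb (hb.trans hy))
      · rw [hy']
        exact GenB.veb (ihy a ha (ha.trans hy)) (ihy b hb (hb.trans hy))
  | @add u v hu hv ihu ihv =>
    intro hΩ y hy
    have huΩ : u < OmegaB θ := lt_of_le_of_lt (le_self_add (a := u) (b := v)) hΩ
    have hvΩ : v < OmegaB θ := lt_of_le_of_lt (le_add_self (a := v) (b := u)) hΩ
    rcases lt_or_ge y u with h | h
    · exact ihu huΩ y h
    · have hyu : y = u + (y - u) := (Ordinal.add_sub_cancel_of_le h).symm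
      have hsub : y - u < v := by
        rw [hyu] at hy
        exact (add_lt_add_iff_left u).1 hy
      rcases eq_or_ne (y - u) 0 with h0 | h0
      · rw [hyu, h0, add_zero]
        exact hu
      · rw [hyu]
        exact GenB.add hu (ihv hvΩ (y - u) hsub)
  | @psi ξ hξ hgen ih =>
    intro _ y hy
    have hyB : y ∈ closB θ ξ (fun ξ' _ => psiB θ ξ') := lt_psiB_mem hy
    exact closB_subset_genB (le_of_lt hξ) hyB

/-! ### The main theorem -/

theorem stmt11 (θ γ : Ordinal) :
    BB θ γ ∩ Set.Iio (OmegaB θ) = Set.Iio (psiB θ γ) := by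
  ext x
  constructor
  · rintro ⟨hxB, hxΩ⟩
    by_contra hx
    rw [Set.mem_Iio, not_lt] at hx
    rcases lt_or_eq_of_le hx with h | h
    · exact psiB_not_mem θ γ (genB_subset_BB (genB_down (BB_subset_genB hxB) hxΩ _ h))
    · exact psiB_not_mem θ γ (h ▸ hxB)
  · intro hx
    rw [Set.mem_Iio] at hx
    exact ⟨lt_psiB_mem hx, lt_trans hx (psiB_lt_omegaB θ γ)⟩
end
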